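/- Fix k ≥ 3, and for each n ≥ 2 let p = p(n) ∈ (0,1). Suppose there exists an integer M ≥ 1 such that, as n → ∞: (i) (2n−1)^{(M+1)l_k + L_k} · p^M → 0; (ii) (2n−1)^{2l_k + M·L_k} · p^M → 0; (iii) (2n−1)^{(2M+1)l_k + M·L_k} · p^{2M} → 0; (iv) (2n−1)^{3M·l_k + L_k} · p^{2M} → 0; and (v) (2n−1)^{(M+1)l_k + 2M·L_k} · p^{2M} → 0. Let R be the random subset of the set C(n,k) of cyclically reduced words of length k in F_n obtained by including each word independently with probability p(n), and let Σ_1, Σ_2, Σ_3 be the associated multigraphs. Then the probability that, for each i = 1, 2, 3, no two vertices of Σ_i are joined by M or more edges, and no vertex of Σ_i is joined by two or more edges to more than M distinct other vertices, tends to 1 as n → ∞. -/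

import Mathlib

open Filter

/-- A letter in the alphabet `{a₁^{±1}, …, a_n^{±1}}`. -/
abbrev Letter (n : ℕ) := Fin n × Bool

/-- A list of letters is reduced if no letter is followed by its inverse. -/
def IsRedList {n : ℕ} (w : List (Letter n)) : Prop :=
  w.IsChain fun a b => b ≠ (a.1, !a.2)

instance {n : ℕ} (w : List (Letter n)) : Decidable (IsRedList w) := by
  unfold IsRedList; infer_instance

/-- A list of letters is cyclically reduced if moreover its first letter is not the inverse of
its last letter. -/
def IsCycList {n : ℕ} (w : List (Letter n)) : Prop :=
  ∀ a ∈ w.head?, ∀ b ∈ w.getLast?, a ≠ (b.1, !b.2)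

instance {n : ℕ} (w : List (Letter n)) : Decidable (IsCycList w) := by
  unfold IsCycList; infer_instance

/-- `CWord n k`: cyclically reduced words of length `k` in the free group on `n` generators. -/
def CWord (n k : ℕ) :=
  {w : List.Vector (Letter n) k // IsRedList w.toList ∧ IsCycList w.toList}

instance (n k : ℕ) : DecidableEq (CWord n k) := by unfold CWord; infer_instance
instance (n k : ℕ) : Fintype (CWord n k) := by unfold CWord; exact Subtype.fintype _

/-- The inverse of a word: reverse the word and invert each letter. -/
def linv {n : ℕ} (w : List (Letter n)) : List (Letter n) :=
  w.reverse.map fun a => (a.1, !a.2)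

/-- `l_k` from the paper: `k/3`, `(k-1)/3`, `(k+1)/3` according to `k mod 3 = 0, 1, 2`. -/
def lk (k : ℕ) : ℕ :=
  if k % 3 = 0 then k / 3 else if k % 3 = 1 then (k - 1) / 3 else (k + 1) / 3

/-- `L_k` from the paper: `k/3`, `(k+2)/3`, `(k-2)/3` according to `k mod 3 = 0, 1, 2`,
so `2l_k + L_k = k`. -/
def Lk (k : ℕ) : ℕ :=
  if k % 3 = 0 then k / 3 else if k % 3 = 1 then (k + 2) / 3 else (k - 2) / 3

/-- The unordered pair of endpoints `{r_x, r_z⁻¹}` of the `Σ₁`-edge of a relator `r`,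
where `r = r_x r_y r_z` with `|r_x| = |r_y| = l_k` and `|r_z| = L_k`. -/
def edge1 {n k : ℕ} (r : CWord n k) : Sym2 (List (Letter n)) :=
  s(r.1.toList.take (lk k), linv (r.1.toList.drop (2 * lk k)))

/-- The unordered pair of endpoints `{r_y, r_x⁻¹}` of the `Σ₂`-edge of a relator `r`. -/
def edge2 {n k : ℕ} (r : CWord n k) : Sym2 (List (Letter n)) :=
  s((r.1.toList.drop (lk k)).take (lk k), linv (r.1.toList.take (lk k)))

/-- The unordered pair of endpoints `{r_z, r_y⁻¹}` of the `Σ₃`-edge of a relator `r`. -/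
def edge3 {n k : ℕ} (r : CWord n k) : Sym2 (List (Letter n)) :=
  s(r.1.toList.drop (2 * lk k), linv ((r.1.toList.drop (lk k)).take (lk k)))

/-- The number of edges joining `u` and `v` in the multigraph `Σ` whose edges have endpoint
pairs `ep r` for relators `r` in the random set `R = {r | ω r = true}`. -/
def multE {n k : ℕ} (ep : CWord n k → Sym2 (List (Letter n))) (ω : CWord n k → Bool)
    (u v : List (Letter n)) : ℕ :=
  (Finset.univ.filter fun r : CWord n k => ω r = true ∧ ep r = s(u, v)).card

/-- Bernoulli weight of a Boolean value. -/
def bern (p : ℝ) (b : Bool) : ℝ := if b then p else 1 - p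

/-- Probability of the event `E` for the random set of relators obtained by including each
cyclically reduced word of length `k` independently with probability `p`. -/
noncomputable def cProb (n k : ℕ) (p : ℝ) (E : Set (CWord n k → Bool)) : ℝ :=
  haveI := Classical.dec
  ∑ ω : CWord n k → Bool, if ω ∈ E then ∏ r, bern p (ω r) else 0


/-- No two vertices of `Σ` are joined by `M` or more edges, and no vertex of `Σ` is joined by
two or more edges to more than `M` distinct other vertices. -/
def boundedMultiplicity {n k : ℕ} (M : ℕ) (ep : CWord n k → Sym2 (List (Letter n)))
    (ω : CWord n k → Bool) : Prop :=
  (∀ u v, multE ep ω u v < M) ∧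
  (∀ u : List (Letter n), ∀ S : Finset (List (Letter n)),
    (∀ v ∈ S, v ≠ u ∧ 2 ≤ multE ep ω u v) → S.card ≤ M)

section Prob

variable {n k : ℕ} {p : ℝ}

noncomputable def wgt (p : ℝ) {n k : ℕ} (ω : CWord n k → Bool) : ℝ := ∏ r, bern p (ω r)

lemma wgt_nonneg (hp0 : 0 ≤ p) (hp1 : p ≤ 1) (ω : CWord n k → Bool) : 0 ≤ wgt p ω := by
  refine Finset.prod_nonneg fun r _ => ?_
  unfold bern; cases ω r <;> simp <;> linarith

lemma cProb_def (E : Set (CWord n k → Bool)) :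
    cProb n k p E = ∑ ω : CWord n k → Bool, E.indicator (wgt p) ω := by
  unfold cProb wgt
  refine Finset.sum_congr ?_ fun ω _ => ?_
  · congr 1
    exact Subsingleton.elim _ _
  by_cases h : ω ∈ E
  · rw [if_pos h, Set.indicator_of_mem h]
  · rw [if_neg h, Set.indicator_of_notMem h]

lemma indicator_nonneg' (hp0 : 0 ≤ p) (hp1 : p ≤ 1) (E : Set (CWord n k → Bool))
    (ω : CWord n k → Bool) : 0 ≤ E.indicator (wgt p) ω :=
  Set.indicator_nonneg (fun ω _ => wgt_nonneg hp0 hp1 ω) ω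

lemma sum_wgt : ∑ ω : CWord n k → Bool, wgt p ω = 1 := by
  unfold wgt
  classical
  rw [← Fintype.piFinset_univ, ← Finset.prod_univ_sum (fun _ => (Finset.univ : Finset Bool))
    (fun _ b => bern p b)]
  have h1 : ∑ b : Bool, bern p b = 1 := by
    rw [Fintype.sum_bool]; unfold bern; simp
  rw [Finset.prod_congr rfl fun r _ => h1, Finset.prod_const_one]

lemma cProb_nonneg (hp0 : 0 ≤ p) (hp1 : p ≤ 1) (E : Set (CWord n k → Bool)) :
    0 ≤ cProb n k p E := by
  rw [cProb_def]
  exact Finset.sum_nonneg fun ω _ => indicator_nonneg' hp0 hp1 E ω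

lemma cProb_add_compl (E : Set (CWord n k → Bool)) :
    cProb n k p E + cProb n k p Eᶜ = 1 := by
  rw [cProb_def, cProb_def, ← Finset.sum_add_distrib,
    ← sum_wgt (p := p) (n := n) (k := k)]
  refine Finset.sum_congr rfl fun ω _ => ?_
  by_cases h : ω ∈ E
  · rw [Set.indicator_of_mem h, Set.indicator_of_notMem (by simpa using h), add_zero]
  · rw [Set.indicator_of_notMem h, Set.indicator_of_mem (by simpa using h), zero_add]

lemma cProb_allOn (hp0 : 0 ≤ p) (hp1 : p ≤ 1) (T : Finset (CWord n k)) :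
    cProb n k p {ω | ∀ r ∈ T, ω r = true} = p ^ T.card := by
  classical
  rw [cProb_def]
  have key : ∀ ω : CWord n k → Bool,
      ({ω : CWord n k → Bool | ∀ r ∈ T, ω r = true}).indicator (wgt p) ω
        = ∏ r, (if r ∈ T then (if ω r then p else 0) else bern p (ω r)) := by
    intro ω
    by_cases h : ∀ r ∈ T, ω r = true
    · rw [Set.indicator_of_mem
        (show ω ∈ {ω : CWord n k → Bool | ∀ r ∈ T, ω r = true} from h)]
      unfold wgt
      refine Finset.prod_congr rfl fun r _ => ?_
      by_cases hr : r ∈ T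
      · rw [if_pos hr, h r hr]; simp [bern]
      · rw [if_neg hr]
    · rw [Set.indicator_of_notMem
        (show ω ∉ {ω : CWord n k → Bool | ∀ r ∈ T, ω r = true} from h)]
      push_neg at h
      obtain ⟨r, hrT, hr⟩ := h
      refine (Finset.prod_eq_zero (Finset.mem_univ r) ?_).symm
      rw [if_pos hrT, if_neg hr]
  rw [Finset.sum_congr rfl fun ω _ => key ω]
  rw [← Fintype.piFinset_univ, ← Finset.prod_univ_sum (fun _ => (Finset.univ : Finset Bool))
    (fun r b => if r ∈ T then (if b then p else 0) else bern p b)]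
  have h2 : ∀ r : CWord n k, (∑ b : Bool, if r ∈ T then (if b then p else 0) else bern p b)
      = if r ∈ T then p else 1 := by
    intro r
    rw [Fintype.sum_bool]
    by_cases hr : r ∈ T <;> simp [hr, bern]
  rw [Finset.prod_congr rfl fun r _ => h2 r, Finset.prod_ite_mem, Finset.univ_inter,
    Finset.prod_const]

lemma cProb_le_sum {ι : Type} (hp0 : 0 ≤ p) (hp1 : p ≤ 1) (I : Finset ι)
    (T : ι → Finset (CWord n k)) (E : Set (CWord n k → Bool))
    (hE : ∀ ω ∈ E, ∃ x ∈ I, ∀ r ∈ T x, ω r = true) :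
    cProb n k p E ≤ ∑ x ∈ I, p ^ (T x).card := by
  classical
  have step1 : cProb n k p E ≤
      ∑ x ∈ I, cProb n k p {ω | ∀ r ∈ T x, ω r = true} := by
    have hrw : ∀ x ∈ I, cProb n k p {ω | ∀ r ∈ T x, ω r = true}
        = ∑ ω : CWord n k → Bool,
            ({ω : CWord n k → Bool | ∀ r ∈ T x, ω r = true}).indicator (wgt p) ω :=
      fun x _ => cProb_def _
    rw [cProb_def, Finset.sum_congr rfl hrw, Finset.sum_comm]
    refine Finset.sum_le_sum fun ω _ => ?_
    by_cases h : ω ∈ E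
    · rw [Set.indicator_of_mem h]
      obtain ⟨x, hxI, hx⟩ := hE ω h
      have hx' : wgt p ω =
          ({ω : CWord n k → Bool | ∀ r ∈ T x, ω r = true}).indicator (wgt p) ω :=
        (Set.indicator_of_mem
          (show ω ∈ {ω : CWord n k → Bool | ∀ r ∈ T x, ω r = true} from hx) _).symm
      rw [hx']
      exact Finset.single_le_sum
        (f := fun y => ({ω : CWord n k → Bool | ∀ r ∈ T y, ω r = true}).indicator (wgt p) ω)
        (fun y _ => indicator_nonneg' hp0 hp1 _ ω) hxI
    · rw [Set.indicator_of_notMem h]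
      exact Finset.sum_nonneg fun y _ => indicator_nonneg' hp0 hp1 _ ω
  refine step1.trans (le_of_eq (Finset.sum_congr rfl fun x _ => ?_))
  exact cProb_allOn hp0 hp1 (T x)

lemma cProb_mono (hp0 : 0 ≤ p) (hp1 : p ≤ 1) {E F : Set (CWord n k → Bool)} (h : E ⊆ F) :
    cProb n k p E ≤ cProb n k p F := by
  rw [cProb_def, cProb_def]
  refine Finset.sum_le_sum fun ω _ => ?_
  by_cases hE : ω ∈ E
  · rw [Set.indicator_of_mem hE, Set.indicator_of_mem (h hE)]
  · rw [Set.indicator_of_notMem hE]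
    exact indicator_nonneg' hp0 hp1 F ω

lemma cProb_union_le (hp0 : 0 ≤ p) (hp1 : p ≤ 1) (E F : Set (CWord n k → Bool)) :
    cProb n k p (E ∪ F) ≤ cProb n k p E + cProb n k p F := by
  rw [cProb_def, cProb_def, cProb_def, ← Finset.sum_add_distrib]
  refine Finset.sum_le_sum fun ω _ => ?_
  by_cases hE : ω ∈ E
  · rw [Set.indicator_of_mem hE, Set.indicator_of_mem (Set.mem_union_left _ hE)]
    have := indicator_nonneg' hp0 hp1 F ω
    linarith
  · by_cases hF : ω ∈ F
    · rw [Set.indicator_of_mem (Set.mem_union_right _ hF), Set.indicator_of_notMem hE,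
        Set.indicator_of_mem hF, zero_add]
    · rw [Set.indicator_of_notMem hE, Set.indicator_of_notMem hF,
        Set.indicator_of_notMem (by simp [hE, hF] : ω ∉ E ∪ F)]
      simp

end Prob
section Words

variable {n k : ℕ}

lemma two_lk_add_Lk (k : ℕ) : 2 * lk k + Lk k = k := by
  unfold lk Lk
  have h3 : k % 3 < 3 := Nat.mod_lt _ (by norm_num)
  split_ifs <;> omega

lemma lk_le (k : ℕ) : 2 * lk k ≤ k := by
  have := two_lk_add_Lk k; omega

lemma linv_linv (w : List (Letter n)) : linv (linv w) = w := by
  simp only [linv, List.map_reverse, List.reverse_reverse, List.map_map]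
  have h : ((fun a : Letter n => (a.1, !a.2)) ∘ fun a : Letter n => (a.1, !a.2)) = id := by
    funext a; simp
  rw [h, List.map_id]

lemma linv_inj : Function.Injective (linv (n := n)) :=
  Function.LeftInverse.injective linv_linv

lemma linv_length (w : List (Letter n)) : (linv w).length = w.length := by
  simp [linv]

lemma decomp3 {α : Type*} (w : List α) (l : ℕ) :
    w = w.take l ++ ((w.drop l).take l ++ w.drop (2 * l)) := by
  have h1 : (w.drop l).drop l = w.drop (2 * l) := by
    rw [List.drop_drop]; ring_nf
  rw [← h1, List.take_append_drop, List.take_append_drop]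

lemma cword_len (r : CWord n k) : r.1.toList.length = k := r.1.2

/-- Packaged data describing one of the three multigraphs. -/
structure GData (n k : ℕ) where
  ep : CWord n k → Sym2 (List (Letter n))
  A : CWord n k → List (Letter n)
  B : CWord n k → List (Letter n)
  F : CWord n k → List (Letter n)
  la : ℕ
  lb : ℕ
  lf : ℕ
  hep : ∀ r, ep r = s(A r, B r)
  hinj : ∀ r r', A r = A r' → B r = B r' → F r = F r' → r = r'
  hA : ∀ r, (A r).length = la
  hB : ∀ r, (B r).length = lb
  hF : ∀ r, (F r).length = lf

lemma sym2_det {α : Type*} {a b c d : α} (h : s(a, b) = s(c, d)) (h1 : a = c) : b = d := by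
  rcases Sym2.eq_iff.1 h with ⟨e1, e2⟩ | ⟨e1, e2⟩
  · exact e2
  · subst h1 e1 e2; rfl

lemma sym2_det' {α : Type*} {a b c d : α} (h : s(a, b) = s(c, d)) (h1 : a ≠ c) :
    a = d ∧ b = c := by
  rcases Sym2.eq_iff.1 h with ⟨e1, e2⟩ | ⟨e1, e2⟩
  · exact absurd e1 h1
  · exact ⟨e1, e2⟩

lemma GData.recon (G : GData n k) {r0 s s' : CWord n k}
    (h : G.ep s = G.ep r0) (h' : G.ep s' = G.ep r0)
    (hb : decide (G.A s = G.A r0) = decide (G.A s' = G.A r0))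
    (hf : G.F s = G.F s') : s = s' := by
  rw [G.hep s, G.hep r0] at h
  rw [G.hep s', G.hep r0] at h'
  by_cases hc : G.A s = G.A r0
  · have hc' : G.A s' = G.A r0 := by
      have : decide (G.A s' = G.A r0) = true := by rw [← hb]; simpa using hc
      simpa using this
    exact G.hinj s s' (hc.trans hc'.symm) ((sym2_det h hc).trans (sym2_det h' hc').symm) hf
  · have hc' : ¬ (G.A s' = G.A r0) := by
      have : decide (G.A s' = G.A r0) = false := by rw [← hb]; simpa using hc
      simpa using this
    obtain ⟨e1, e2⟩ := sym2_det' h hc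
    obtain ⟨e1', e2'⟩ := sym2_det' h' hc'
    exact G.hinj s s' (e1.trans e1'.symm) (e2.trans e2'.symm) hf

/-- The data for `Σ₁`. -/
def G1 (n k : ℕ) : GData n k where
  ep := edge1
  A := fun r => r.1.toList.take (lk k)
  B := fun r => linv (r.1.toList.drop (2 * lk k))
  F := fun r => (r.1.toList.drop (lk k)).take (lk k)
  la := lk k
  lb := Lk k
  lf := lk k
  hep := fun r => rfl
  hinj := by
    intro r r' hA hB hF
    have hD := linv_inj hB
    apply Subtype.ext
    apply List.Vector.eq
    rw [decomp3 r.1.toList (lk k), decomp3 r'.1.toList (lk k), hA, hF, hD]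
  hA := by
    intro r; rw [List.length_take, cword_len]
    have := lk_le k; omega
  hB := by
    intro r; rw [linv_length, List.length_drop, cword_len]
    have := two_lk_add_Lk k; omega
  hF := by
    intro r; rw [List.length_take, List.length_drop, cword_len]
    have := lk_le k; omega

/-- The data for `Σ₂`. -/
def G2 (n k : ℕ) : GData n k where
  ep := edge2
  A := fun r => (r.1.toList.drop (lk k)).take (lk k)
  B := fun r => linv (r.1.toList.take (lk k))
  F := fun r => r.1.toList.drop (2 * lk k)
  la := lk k
  lb := lk k
  lf := Lk k
  hep := fun r => rfl
  hinj := by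
    intro r r' hA hB hF
    have hD := linv_inj hB
    apply Subtype.ext
    apply List.Vector.eq
    rw [decomp3 r.1.toList (lk k), decomp3 r'.1.toList (lk k), hA, hF, hD]
  hA := by
    intro r; rw [List.length_take, List.length_drop, cword_len]
    have := lk_le k; omega
  hB := by
    intro r; rw [linv_length, List.length_take, cword_len]
    have := lk_le k; omega
  hF := by
    intro r; rw [List.length_drop, cword_len]
    have := two_lk_add_Lk k; omega

/-- The data for `Σ₃`. -/
def G3 (n k : ℕ) : GData n k where
  ep := edge3
  A := fun r => r.1.toList.drop (2 * lk k)
  B := fun r => linv ((r.1.toList.drop (lk k)).take (lk k))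
  F := fun r => r.1.toList.take (lk k)
  la := Lk k
  lb := lk k
  lf := lk k
  hep := fun r => rfl
  hinj := by
    intro r r' hA hB hF
    have hD := linv_inj hB
    apply Subtype.ext
    apply List.Vector.eq
    rw [decomp3 r.1.toList (lk k), decomp3 r'.1.toList (lk k), hA, hF, hD]
  hA := by
    intro r; rw [List.length_drop, cword_len]
    have := two_lk_add_Lk k; omega
  hB := by
    intro r; rw [linv_length, List.length_take, List.length_drop, cword_len]
    have := lk_le k; omega
  hF := by
    intro r; rw [List.length_take, cword_len]
    have := lk_le k; omega

lemma card_letter : Fintype.card (Letter n) = 2 * n := by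
  simp [mul_comm]

lemma card_cword_le : Fintype.card (CWord n k) ≤ (2 * n) ^ k := by
  have h1 : Fintype.card (CWord n k) ≤ Fintype.card (List.Vector (Letter n) k) :=
    Fintype.card_le_of_injective (fun r => r.1) (fun a b h => Subtype.ext h)
  rwa [card_vector, card_letter] at h1

end Words
section Moment1

variable {n k : ℕ} {p : ℝ}

/-- index `i+1` in `Fin M` for `i : Fin (M-1)` -/
def fsucc {M : ℕ} (i : Fin (M - 1)) : Fin M := ⟨i.1 + 1, by omega⟩

lemma moment1 (G : GData n k) (M : ℕ) (hM : 1 ≤ M) (hp0 : 0 ≤ p) (hp1 : p ≤ 1) :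
    cProb n k p {ω | ∃ u v, M ≤ multE G.ep ω u v}
      ≤ ((Fintype.card (CWord n k) * (2 * (2 * n) ^ G.lf) ^ (M - 1) : ℕ) : ℝ) * p ^ M := by
  classical
  haveI : NeZero M := ⟨by omega⟩
  set I : Finset (Fin M → CWord n k) :=
    Finset.univ.filter fun x => Function.Injective x ∧ ∀ i, G.ep (x i) = G.ep (x 0) with hI
  have key : cProb n k p {ω | ∃ u v, M ≤ multE G.ep ω u v}
      ≤ ∑ x ∈ I, p ^ (Finset.image x Finset.univ).card := by
    refine cProb_le_sum hp0 hp1 I (fun x => Finset.image x Finset.univ) _ ?_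
    rintro ω ⟨u, v, huv⟩
    unfold multE at huv
    obtain ⟨T, hT, hTc⟩ := Finset.exists_subset_card_eq huv
    set e := Finset.equivFinOfCardEq hTc
    refine ⟨fun i => (e.symm i : _), ?_, ?_⟩
    · rw [hI, Finset.mem_filter]
      refine ⟨Finset.mem_univ _, fun i j hij => ?_, fun i => ?_⟩
      · exact e.symm.injective (Subtype.val_injective hij)
      · have h1 := (Finset.mem_filter.1 (hT (e.symm i).2)).2.2
        have h2 := (Finset.mem_filter.1 (hT (e.symm 0).2)).2.2
        rw [h1, h2]
    · intro r hr
      obtain ⟨i, _, rfl⟩ := Finset.mem_image.1 hr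
      exact (Finset.mem_filter.1 (hT (e.symm i).2)).2.1
  have card_im : ∀ x ∈ I, (Finset.image x Finset.univ).card = M := by
    intro x hx
    rw [hI, Finset.mem_filter] at hx
    rw [Finset.card_image_of_injective _ hx.2.1, Finset.card_univ, Fintype.card_fin]
  have key2 : ∑ x ∈ I, p ^ (Finset.image x Finset.univ).card = (I.card : ℝ) * p ^ M := by
    rw [Finset.sum_congr rfl fun x hx => by rw [card_im x hx]]
    rw [Finset.sum_const, nsmul_eq_mul]
  have cardI : I.card ≤ Fintype.card (CWord n k) * (2 * (2 * n) ^ G.lf) ^ (M - 1) := by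
    have hinj : Set.InjOn
        (fun x : Fin M → CWord n k =>
          (x 0, fun i : Fin (M - 1) =>
            (decide (G.A (x (fsucc i)) = G.A (x 0)),
             (⟨G.F (x (fsucc i)), G.hF _⟩ : List.Vector (Letter n) G.lf)))) I := by
      intro x hx y hy hxy
      rw [Finset.mem_coe, Finset.mem_filter] at hx hy
      have h0 : x 0 = y 0 := congrArg Prod.fst hxy
      have h2 := congrArg Prod.snd hxy
      funext j
      rcases j with ⟨jv, hj⟩
      match jv, hj with
      | 0, hj => exact h0
      | jv + 1, hj =>
        have hiv : jv < M - 1 := by omega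
        have h3 := congrFun h2 ⟨jv, hiv⟩
        have hb : decide (G.A (x (fsucc ⟨jv, hiv⟩)) = G.A (x 0))
            = decide (G.A (y (fsucc ⟨jv, hiv⟩)) = G.A (y 0)) := congrArg Prod.fst h3
        have hf : G.F (x (fsucc ⟨jv, hiv⟩)) = G.F (y (fsucc ⟨jv, hiv⟩)) :=
          congrArg (fun v => (Prod.snd v).1) h3
        have hx1 := hx.2.2 (fsucc ⟨jv, hiv⟩)
        have hy1 := hy.2.2 (fsucc ⟨jv, hiv⟩)
        rw [← h0] at hy1 hb
        have : x (fsucc ⟨jv, hiv⟩) = y (fsucc ⟨jv, hiv⟩) :=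
          G.recon hx1 hy1 hb hf
        exact this
    calc I.card ≤ Fintype.card (CWord n k ×
        (Fin (M - 1) → Bool × List.Vector (Letter n) G.lf)) := by
          rw [← Finset.card_univ]
          exact Finset.card_le_card_of_injOn _ (fun _ _ => Finset.mem_univ _) hinj
      _ = Fintype.card (CWord n k) * (2 * (2 * n) ^ G.lf) ^ (M - 1) := by
          rw [Fintype.card_prod, Fintype.card_fun, Fintype.card_prod, Fintype.card_bool,
            card_vector, card_letter, Fintype.card_fin]
  refine (key.trans (le_of_eq key2)).trans ?_
  have hpow : (0:ℝ) ≤ p ^ M := pow_nonneg hp0 M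
  exact mul_le_mul_of_nonneg_right (by exact_mod_cast cardI) hpow

end Moment1
section Moment2

variable {n k : ℕ} {p : ℝ}

/-- The vertex `u` encoded by a configuration. -/
def uOf {n k M : ℕ} [NeZero M] (G : GData n k)
    (x : (Fin M → CWord n k) × (Fin M → CWord n k) × (Fin M → Bool)) : List (Letter n) :=
  if x.2.2 0 then G.A (x.1 0) else G.B (x.1 0)

/-- The neighbours `v i` encoded by a configuration. -/
def vOf {n k M : ℕ} [NeZero M] (G : GData n k)
    (x : (Fin M → CWord n k) × (Fin M → CWord n k) × (Fin M → Bool)) (i : Fin M) :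
    List (Letter n) :=
  if x.2.2 i then G.B (x.1 i) else G.A (x.1 i)

/-- The conditions defining a valid configuration. -/
def Cond {n k M : ℕ} [NeZero M] (G : GData n k)
    (x : (Fin M → CWord n k) × (Fin M → CWord n k) × (Fin M → Bool)) : Prop :=
  (∀ i, (if x.2.2 i then G.A (x.1 i) else G.B (x.1 i)) = uOf G x) ∧
  (∀ i, vOf G x i ≠ uOf G x) ∧
  Function.Injective (vOf G x) ∧
  (∀ i, x.1 i ≠ x.2.1 i ∧ G.ep (x.2.1 i) = G.ep (x.1 i))

lemma cond_ep {M : ℕ} (G : GData n k) [NeZero M]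
    {x : (Fin M → CWord n k) × (Fin M → CWord n k) × (Fin M → Bool)}
    (hx : Cond G x) (i : Fin M) : G.ep (x.1 i) = s(uOf G x, vOf G x i) := by
  rw [G.hep]
  by_cases h : x.2.2 i
  · have h1 := hx.1 i
    rw [if_pos h] at h1
    rw [h1]
    unfold vOf
    rw [if_pos h]
  · have h1 := hx.1 i
    rw [if_neg h] at h1
    rw [h1]
    unfold vOf
    rw [if_neg h]
    exact Sym2.eq_swap

lemma moment2 (G : GData n k) (M : ℕ) (hM : 1 ≤ M) (hp0 : 0 ≤ p) (hp1 : p ≤ 1) :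
    cProb n k p {ω | ∃ (u : List (Letter n)) (S : Finset (List (Letter n))),
        (∀ v ∈ S, v ≠ u ∧ 2 ≤ multE G.ep ω u v) ∧ M < S.card}
      ≤ ((Fintype.card (CWord n k) * 2 * (2 * (2 * n) ^ G.lf) *
          ((2 * n) ^ G.lb * (2 * n) ^ G.lf + (2 * n) ^ G.la * (2 * n) ^ G.lf) ^ (M - 1) *
          (2 * (2 * n) ^ G.lf) ^ (M - 1) : ℕ) : ℝ) * p ^ (2 * M) := by
  classical
  haveI : NeZero M := ⟨by omega⟩
  set ι := (Fin M → CWord n k) × (Fin M → CWord n k) × (Fin M → Bool) with hiota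
  set I : Finset ι := Finset.univ.filter (Cond G) with hI
  set Tset : ι → Finset (CWord n k) := fun x =>
    Finset.image (fun ib : Fin M × Bool => if ib.2 then x.1 ib.1 else x.2.1 ib.1)
      Finset.univ with hTset
  -- each element of Tset x has edge s(u, v i)
  have hepz : ∀ x : ι, Cond G x → ∀ (i : Fin M) (b : Bool),
      G.ep (if b then x.1 i else x.2.1 i) = s(uOf G x, vOf G x i) := by
    intro x hx i b
    cases b
    · rw [if_neg (by simp), (hx.2.2.2 i).2]
      exact cond_ep G hx i
    · rw [if_pos rfl]
      exact cond_ep G hx i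
  -- injectivity of the map defining Tset x
  have hTinj : ∀ x : ι, Cond G x → Function.Injective
      (fun ib : Fin M × Bool => if ib.2 then x.1 ib.1 else x.2.1 ib.1) := by
    intro x hx ⟨i, b⟩ ⟨j, c⟩ h
    dsimp only at h
    have hij : i = j := by
      by_contra hij
      have h1 := hepz x hx i b
      have h2 := hepz x hx j c
      rw [h] at h1
      rw [h1] at h2
      rcases Sym2.eq_iff.1 h2 with ⟨e1, e2⟩ | ⟨e1, e2⟩
      · exact hij (hx.2.2.1 e2)
      · exact hx.2.1 i e2
    subst hij
    have hbc : b = c := by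
      by_contra hbc
      rcases Bool.eq_false_or_eq_true b with hb | hb <;>
        rcases Bool.eq_false_or_eq_true c with hc | hc <;>
          simp [hb, hc] at hbc h ⊢
      · exact (hx.2.2.2 i).1 h
      · exact (hx.2.2.2 i).1 h.symm
    rw [hbc]
  have card_im : ∀ x ∈ I, (Tset x).card = 2 * M := by
    intro x hx
    rw [hI, Finset.mem_filter] at hx
    rw [hTset]
    rw [Finset.card_image_of_injective _ (hTinj x hx.2), Finset.card_univ,
      Fintype.card_prod, Fintype.card_fin, Fintype.card_bool, mul_comm]
  -- the union bound
  have key : cProb n k p {ω | ∃ (u : List (Letter n)) (S : Finset (List (Letter n))),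
        (∀ v ∈ S, v ≠ u ∧ 2 ≤ multE G.ep ω u v) ∧ M < S.card}
      ≤ ∑ x ∈ I, p ^ (Tset x).card := by
    refine cProb_le_sum hp0 hp1 I Tset _ ?_
    rintro ω ⟨u, S, hS, hcard⟩
    obtain ⟨S', hsub, hScard⟩ := Finset.exists_subset_card_eq (le_of_lt hcard)
    set e := Finset.equivFinOfCardEq hScard
    set v : Fin M → List (Letter n) := fun i => (e.symm i : _) with hv
    have hvS : ∀ i, v i ∈ S := fun i => hsub (e.symm i).2
    have hvinj : Function.Injective v :=
      fun i j hij => e.symm.injective (Subtype.val_injective hij)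
    have hv2 : ∀ i, 1 < (Finset.univ.filter fun r : CWord n k =>
        ω r = true ∧ G.ep r = s(u, v i)).card := by
      intro i
      have := (hS _ (hvS i)).2
      unfold multE at this
      omega
    have hex : ∀ i, ∃ a, (a ∈ Finset.univ.filter fun r : CWord n k =>
        ω r = true ∧ G.ep r = s(u, v i)) ∧ ∃ b, (b ∈ Finset.univ.filter fun r : CWord n k =>
        ω r = true ∧ G.ep r = s(u, v i)) ∧ a ≠ b := by
      intro i
      obtain ⟨a, ha, b, hb, hab⟩ := Finset.one_lt_card.1 (hv2 i)
      exact ⟨a, ha, b, hb, hab⟩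
    choose rr h1 rr' h2 hne using hex
    have hmem1 : ∀ i, ω (rr i) = true ∧ G.ep (rr i) = s(u, v i) :=
      fun i => (Finset.mem_filter.1 (h1 i)).2
    have hmem2 : ∀ i, ω (rr' i) = true ∧ G.ep (rr' i) = s(u, v i) :=
      fun i => (Finset.mem_filter.1 (h2 i)).2
    set t : Fin M → Bool := fun i => decide (G.A (rr i) = u ∧ G.B (rr i) = v i) with ht
    set x : ι := (rr, rr', t) with hx
    have hcase : ∀ i, (G.A (rr i) = u ∧ G.B (rr i) = v i) ∨
        (t i = false ∧ G.A (rr i) = v i ∧ G.B (rr i) = u) := by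
      intro i
      have hd := (hmem1 i).2
      rw [G.hep] at hd
      by_cases hc : G.A (rr i) = u ∧ G.B (rr i) = v i
      · exact Or.inl hc
      · rcases Sym2.eq_iff.1 hd with he | ⟨e1, e2⟩
        · exact absurd he hc
        · refine Or.inr ⟨?_, e1, e2⟩
          show decide (G.A (rr i) = u ∧ G.B (rr i) = v i) = false
          exact decide_eq_false hc
    have htt : ∀ i, (if t i then G.A (rr i) else G.B (rr i)) = u := by
      intro i
      rcases hcase i with ⟨e1, e2⟩ | ⟨hf, e1, e2⟩
      · by_cases hti : t i
        · rw [if_pos hti]; exact e1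
        · rw [if_neg hti]
          exfalso; exact hti (by simp [ht, e1, e2])
      · rw [hf]; simpa using e2
    have hvv : ∀ i, vOf G x i = v i := by
      intro i
      unfold vOf
      rcases hcase i with ⟨e1, e2⟩ | ⟨hf, e1, e2⟩
      · by_cases hti : t i
        · show (if x.2.2 i then G.B (x.1 i) else G.A (x.1 i)) = v i
          rw [hx]; dsimp only
          rw [if_pos hti]; exact e2
        · exfalso; exact hti (by simp [ht, e1, e2])
      · show (if x.2.2 i then G.B (x.1 i) else G.A (x.1 i)) = v i
        rw [hx]; dsimp only
        simp [hf, e1]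
    have huu : uOf G x = u := by
      unfold uOf
      rw [hx]; dsimp only
      exact htt 0
    refine ⟨x, ?_, ?_⟩
    · rw [hI, Finset.mem_filter]
      refine ⟨Finset.mem_univ _, ?_, ?_, ?_, ?_⟩
      · intro i
        rw [huu]
        exact htt i
      · intro i
        rw [huu, hvv i]
        exact (hS _ (hvS i)).1
      · intro i j hij
        rw [hvv i, hvv j] at hij
        exact hvinj hij
      · intro i
        exact ⟨hne i, (hmem2 i).2.trans (hmem1 i).2.symm⟩
    · intro z hz
      rw [hTset] at hz
      obtain ⟨⟨i, b⟩, _, rfl⟩ := Finset.mem_image.1 hz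
      cases b
      · exact (hmem2 i).1
      · exact (hmem1 i).1
  -- counting the configurations
  have key2 : ∑ x ∈ I, p ^ (Tset x).card = (I.card : ℝ) * p ^ (2 * M) := by
    rw [Finset.sum_congr rfl fun x hx => by rw [card_im x hx]]
    rw [Finset.sum_const, nsmul_eq_mul]
  have cardI : I.card ≤ Fintype.card (CWord n k) * 2 * (2 * (2 * n) ^ G.lf) *
      ((2 * n) ^ G.lb * (2 * n) ^ G.lf + (2 * n) ^ G.la * (2 * n) ^ G.lf) ^ (M - 1) *
      (2 * (2 * n) ^ G.lf) ^ (M - 1) := by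
    set φ : ι → CWord n k × Bool × (Bool × List.Vector (Letter n) G.lf) ×
      ((Fin (M - 1) → (List.Vector (Letter n) G.lb × List.Vector (Letter n) G.lf) ⊕
          (List.Vector (Letter n) G.la × List.Vector (Letter n) G.lf)) ×
       (Fin (M - 1) → Bool × List.Vector (Letter n) G.lf)) := fun x =>
      (x.1 0, x.2.2 0,
       (decide (G.A (x.2.1 0) = G.A (x.1 0)), ⟨G.F (x.2.1 0), G.hF _⟩),
       (fun i => if x.2.2 (fsucc i) then
            Sum.inl (⟨G.B (x.1 (fsucc i)), G.hB _⟩, ⟨G.F (x.1 (fsucc i)), G.hF _⟩)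
          else
            Sum.inr (⟨G.A (x.1 (fsucc i)), G.hA _⟩, ⟨G.F (x.1 (fsucc i)), G.hF _⟩),
        fun i => (decide (G.A (x.2.1 (fsucc i)) = G.A (x.1 (fsucc i))),
          ⟨G.F (x.2.1 (fsucc i)), G.hF _⟩))) with hφ
    have hinj : Set.InjOn φ I := by
      intro x hx y hy hxy
      rw [Finset.mem_coe, hI, Finset.mem_filter] at hx hy
      replace hx := hx.2; replace hy := hy.2
      have e1 : x.1 0 = y.1 0 := congrArg Prod.fst hxy
      have e2 : x.2.2 0 = y.2.2 0 := congrArg (fun z => z.2.1) hxy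
      have hu : uOf G x = uOf G y := by
        unfold uOf; rw [e1, e2]
      have e3b : decide (G.A (x.2.1 0) = G.A (x.1 0))
          = decide (G.A (y.2.1 0) = G.A (y.1 0)) :=
        congrArg (fun z => z.2.2.1.1) hxy
      have e3f : G.F (x.2.1 0) = G.F (y.2.1 0) :=
        congrArg (fun z => (z.2.2.1.2).1) hxy
      have e4 := congrArg (fun z => z.2.2.2.1) hxy
      have e5 := congrArg (fun z => z.2.2.2.2) hxy
      -- first pair
      have hr0 : x.2.1 0 = y.2.1 0 := by
        rw [← e1] at e3b
        refine G.recon (r0 := x.1 0) (hx.2.2.2 0).2 ?_ e3b e3f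
        rw [e1]; exact (hy.2.2.2 0).2
      -- components for larger indices
      have hrj : ∀ i : Fin (M - 1), x.1 (fsucc i) = y.1 (fsucc i) ∧
          x.2.2 (fsucc i) = y.2.2 (fsucc i) := by
        intro i
        have h4 := congrFun e4 i
        simp only [hφ] at h4
        by_cases hb1 : x.2.2 (fsucc i)
        · by_cases hb2 : y.2.2 (fsucc i)
          · rw [if_pos hb1, if_pos hb2] at h4
            have hB : G.B (x.1 (fsucc i)) = G.B (y.1 (fsucc i)) := by
              have := Sum.inl.inj h4
              exact congrArg (fun w => (Prod.fst w).1) this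
            have hF : G.F (x.1 (fsucc i)) = G.F (y.1 (fsucc i)) := by
              have := Sum.inl.inj h4
              exact congrArg (fun w => (Prod.snd w).1) this
            have hA : G.A (x.1 (fsucc i)) = G.A (y.1 (fsucc i)) := by
              have h5 := hx.1 (fsucc i)
              have h6 := hy.1 (fsucc i)
              rw [if_pos hb1] at h5
              rw [if_pos hb2] at h6
              rw [h5, h6, hu]
            exact ⟨G.hinj _ _ hA hB hF, by rw [hb1, hb2]⟩
          · rw [if_pos hb1, if_neg hb2] at h4
            exact absurd h4 (by simp)
        · by_cases hb2 : y.2.2 (fsucc i)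
          · rw [if_neg hb1, if_pos hb2] at h4
            exact absurd h4 (by simp)
          · rw [if_neg hb1, if_neg hb2] at h4
            have hA : G.A (x.1 (fsucc i)) = G.A (y.1 (fsucc i)) := by
              have := Sum.inr.inj h4
              exact congrArg (fun w => (Prod.fst w).1) this
            have hF : G.F (x.1 (fsucc i)) = G.F (y.1 (fsucc i)) := by
              have := Sum.inr.inj h4
              exact congrArg (fun w => (Prod.snd w).1) this
            have hB : G.B (x.1 (fsucc i)) = G.B (y.1 (fsucc i)) := by
              have h5 := hx.1 (fsucc i)
              have h6 := hy.1 (fsucc i)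
              rw [if_neg hb1] at h5
              rw [if_neg hb2] at h6
              rw [h5, h6, hu]
            refine ⟨G.hinj _ _ hA hB hF, ?_⟩
            rw [Bool.not_eq_true] at hb1 hb2
            rw [hb1, hb2]
      have hrj' : ∀ i : Fin (M - 1), x.2.1 (fsucc i) = y.2.1 (fsucc i) := by
        intro i
        have h5 := congrFun e5 i
        have hb : decide (G.A (x.2.1 (fsucc i)) = G.A (x.1 (fsucc i)))
            = decide (G.A (y.2.1 (fsucc i)) = G.A (y.1 (fsucc i))) :=
          congrArg Prod.fst h5
        have hf : G.F (x.2.1 (fsucc i)) = G.F (y.2.1 (fsucc i)) :=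
          congrArg (fun w => (Prod.snd w).1) h5
        rw [← (hrj i).1] at hb
        refine G.recon (r0 := x.1 (fsucc i)) (hx.2.2.2 (fsucc i)).2 ?_ hb hf
        rw [(hrj i).1]
        exact (hy.2.2.2 (fsucc i)).2
      -- assemble
      have fin_cases : ∀ (P : Fin M → Prop), P 0 → (∀ i : Fin (M - 1), P (fsucc i)) →
          ∀ j, P j := by
        intro P h0 hs j
        rcases j with ⟨jv, hj⟩
        match jv, hj with
        | 0, hj => exact h0
        | jv + 1, hj =>
          have hiv : jv < M - 1 := by omega
          exact hs ⟨jv, hiv⟩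
      refine Prod.ext ?_ (Prod.ext ?_ ?_)
      · funext j
        exact fin_cases (fun j => x.1 j = y.1 j) e1 (fun i => (hrj i).1) j
      · funext j
        exact fin_cases (fun j => x.2.1 j = y.2.1 j) hr0 (fun i => hrj' i) j
      · funext j
        exact fin_cases (fun j => x.2.2 j = y.2.2 j) e2 (fun i => (hrj i).2) j
    have step := Finset.card_le_card_of_injOn φ (fun _ _ => Finset.mem_univ _) hinj
    rw [Finset.card_univ] at step
    refine step.trans (le_of_eq ?_)
    simp only [Fintype.card_prod, Fintype.card_fun, Fintype.card_sum, Fintype.card_bool,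
      card_vector, card_letter, Fintype.card_fin]
    ring
  refine (key.trans (le_of_eq key2)).trans ?_
  exact mul_le_mul_of_nonneg_right (by exact_mod_cast cardI) (pow_nonneg hp0 _)

end Moment2
section Glue

variable {n k : ℕ} {p : ℝ}

lemma cProb_le_one (hp0 : 0 ≤ p) (hp1 : p ≤ 1) (E : Set (CWord n k → Bool)) :
    cProb n k p E ≤ 1 := by
  have h := cProb_add_compl (n := n) (k := k) (p := p) E
  have h2 := cProb_nonneg hp0 hp1 Eᶜ
  linarith

lemma bad_subset (G : GData n k) (M : ℕ) :
    {ω : CWord n k → Bool | ¬ boundedMultiplicity M G.ep ω} ⊆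
      {ω | ∃ u v, M ≤ multE G.ep ω u v} ∪
      {ω | ∃ (u : List (Letter n)) (S : Finset (List (Letter n))),
        (∀ v ∈ S, v ≠ u ∧ 2 ≤ multE G.ep ω u v) ∧ M < S.card} := by
  intro ω hω
  rw [Set.mem_setOf_eq, boundedMultiplicity, not_and_or] at hω
  rcases hω with h | h
  · left
    push_neg at h
    obtain ⟨u, v, huv⟩ := h
    exact ⟨u, v, huv⟩
  · right
    push_neg at h
    obtain ⟨u, S, hS, hc⟩ := h
    exact ⟨u, S, hS, hc⟩

lemma add_pow_le_real (a b : ℝ) (ha : 0 ≤ a) (hb : 0 ≤ b) (m : ℕ) :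
    (a + b) ^ m ≤ 2 ^ m * (a ^ m + b ^ m) := by
  rcases le_total a b with h | h
  · calc (a + b) ^ m ≤ (2 * b) ^ m := by
          refine pow_le_pow_left₀ (by linarith) (by linarith) m
      _ = 2 ^ m * b ^ m := mul_pow 2 b m
      _ ≤ 2 ^ m * (a ^ m + b ^ m) := by
          refine mul_le_mul_of_nonneg_left ?_ (by positivity)
          have := pow_nonneg ha m
          linarith
  · calc (a + b) ^ m ≤ (2 * a) ^ m := by
          refine pow_le_pow_left₀ (by linarith) (by linarith) m
      _ = 2 ^ m * a ^ m := mul_pow 2 a m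
      _ ≤ 2 ^ m * (a ^ m + b ^ m) := by
          refine mul_le_mul_of_nonneg_left ?_ (by positivity)
          have := pow_nonneg hb m
          linarith

lemma m1_bound (n k lf M' : ℕ) :
    ((Fintype.card (CWord n k) * (2 * (2 * n) ^ lf) ^ (M' + 1 - 1) : ℕ) : ℝ)
      ≤ 2 ^ M' * (2 * (n : ℝ)) ^ (k + M' * lf) := by
  have hB : (Fintype.card (CWord n k) * (2 * (2 * n) ^ lf) ^ (M' + 1 - 1) : ℕ)
      ≤ (2 * n) ^ k * (2 * (2 * n) ^ lf) ^ M' := by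
    simp only [Nat.add_sub_cancel]
    exact Nat.mul_le_mul_right _ card_cword_le
  calc ((Fintype.card (CWord n k) * (2 * (2 * n) ^ lf) ^ (M' + 1 - 1) : ℕ) : ℝ)
      ≤ (((2 * n) ^ k * (2 * (2 * n) ^ lf) ^ M' : ℕ) : ℝ) := by exact_mod_cast hB
    _ = 2 ^ M' * (2 * (n : ℝ)) ^ (k + M' * lf) := by push_cast; ring

lemma m2_bound (n k lf lb la M' : ℕ) :
    ((Fintype.card (CWord n k) * 2 * (2 * (2 * n) ^ lf) *
        ((2 * n) ^ lb * (2 * n) ^ lf + (2 * n) ^ la * (2 * n) ^ lf) ^ (M' + 1 - 1) *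
        (2 * (2 * n) ^ lf) ^ (M' + 1 - 1) : ℕ) : ℝ)
      ≤ 2 ^ (2 * M' + 2) * ((2 * (n : ℝ)) ^ (k + lf + M' * (lb + lf) + M' * lf)
          + (2 * (n : ℝ)) ^ (k + lf + M' * (la + lf) + M' * lf)) := by
  have hcast : ((Fintype.card (CWord n k) * 2 * (2 * (2 * n) ^ lf) *
        ((2 * n) ^ lb * (2 * n) ^ lf + (2 * n) ^ la * (2 * n) ^ lf) ^ (M' + 1 - 1) *
        (2 * (2 * n) ^ lf) ^ (M' + 1 - 1) : ℕ) : ℝ)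
      = (Fintype.card (CWord n k) : ℝ) * 2 * (2 * (2 * (n:ℝ)) ^ lf) *
        ((2 * (n:ℝ)) ^ lb * (2 * (n:ℝ)) ^ lf + (2 * (n:ℝ)) ^ la * (2 * (n:ℝ)) ^ lf) ^ M' *
        (2 * (2 * (n:ℝ)) ^ lf) ^ M' := by
    simp only [Nat.add_sub_cancel]
    push_cast
    ring
  rw [hcast]
  have hcc : (Fintype.card (CWord n k) : ℝ) ≤ (2 * (n:ℝ)) ^ k := by
    have := card_cword_le (n := n) (k := k)
    calc (Fintype.card (CWord n k) : ℝ) ≤ (((2 * n) ^ k : ℕ) : ℝ) := by exact_mod_cast this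
      _ = (2 * (n:ℝ)) ^ k := by push_cast; ring
  calc (Fintype.card (CWord n k) : ℝ) * 2 * (2 * (2 * (n:ℝ)) ^ lf) *
        ((2 * (n:ℝ)) ^ lb * (2 * (n:ℝ)) ^ lf + (2 * (n:ℝ)) ^ la * (2 * (n:ℝ)) ^ lf) ^ M' *
        (2 * (2 * (n:ℝ)) ^ lf) ^ M'
      ≤ (2 * (n:ℝ)) ^ k * 2 * (2 * (2 * (n:ℝ)) ^ lf) *
        ((2 * (n:ℝ)) ^ lb * (2 * (n:ℝ)) ^ lf + (2 * (n:ℝ)) ^ la * (2 * (n:ℝ)) ^ lf) ^ M' *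
        (2 * (2 * (n:ℝ)) ^ lf) ^ M' := by
        gcongr
    _ ≤ (2 * (n:ℝ)) ^ k * 2 * (2 * (2 * (n:ℝ)) ^ lf) *
        (2 ^ M' * (((2 * (n:ℝ)) ^ lb * (2 * (n:ℝ)) ^ lf) ^ M'
          + ((2 * (n:ℝ)) ^ la * (2 * (n:ℝ)) ^ lf) ^ M')) *
        (2 * (2 * (n:ℝ)) ^ lf) ^ M' := by
        gcongr
        exact add_pow_le_real _ _ (by positivity) (by positivity) M'
    _ = 2 ^ (2 * M' + 2) * ((2 * (n : ℝ)) ^ (k + lf + M' * (lb + lf) + M' * lf)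
          + (2 * (n : ℝ)) ^ (k + lf + M' * (la + lf) + M' * lf)) := by
        ring

lemma tendsto_single (p : ℕ → ℝ) (hp : ∀ n, 0 < p n ∧ p n < 1) (e m : ℕ) (C : ℝ) (hC : 0 ≤ C)
    (h : Filter.Tendsto (fun n : ℕ => (2 * (n:ℝ) - 1) ^ e * p n ^ m) Filter.atTop (nhds 0))
    (g : ℕ → ℝ) (hg0 : ∀ n, 0 ≤ g n)
    (hgle : ∀ n : ℕ, 1 ≤ n → g n ≤ C * ((2 * (n:ℝ)) ^ e * p n ^ m)) :
    Filter.Tendsto g Filter.atTop (nhds 0) := by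
  have key : Filter.Tendsto (fun n : ℕ => (C * 2 ^ e) * ((2 * (n:ℝ) - 1) ^ e * p n ^ m))
      Filter.atTop (nhds 0) := by
    simpa using h.const_mul (C * 2 ^ e)
  refine squeeze_zero' ?_ ?_ key
  · filter_upwards with n using hg0 n
  · filter_upwards [Filter.eventually_ge_atTop 1] with n hn
    refine (hgle n hn).trans ?_
    have h1 : (1:ℝ) ≤ (n:ℝ) := by exact_mod_cast hn
    have h2 : (2 * (n:ℝ)) ^ e ≤ 2 ^ e * (2 * (n:ℝ) - 1) ^ e := by
      calc (2 * (n:ℝ)) ^ e ≤ (2 * (2 * (n:ℝ) - 1)) ^ e :=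
            pow_le_pow_left₀ (by positivity) (by linarith) e
        _ = 2 ^ e * (2 * (n:ℝ) - 1) ^ e := mul_pow _ _ _
    have hpm : (0:ℝ) ≤ p n ^ m := le_of_lt (pow_pos (hp n).1 m)
    calc C * ((2 * (n:ℝ)) ^ e * p n ^ m)
        ≤ C * ((2 ^ e * (2 * (n:ℝ) - 1) ^ e) * p n ^ m) := by
          refine mul_le_mul_of_nonneg_left ?_ hC
          exact mul_le_mul_of_nonneg_right h2 hpm
      _ = (C * 2 ^ e) * ((2 * (n:ℝ) - 1) ^ e * p n ^ m) := by ring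

lemma tendsto_double (p : ℕ → ℝ) (hp : ∀ n, 0 < p n ∧ p n < 1) (e1 e2 m : ℕ) (C : ℝ)
    (hC : 0 ≤ C)
    (hA : Filter.Tendsto (fun n : ℕ => (2 * (n:ℝ) - 1) ^ e1 * p n ^ m) Filter.atTop (nhds 0))
    (hB : Filter.Tendsto (fun n : ℕ => (2 * (n:ℝ) - 1) ^ e2 * p n ^ m) Filter.atTop (nhds 0))
    (g : ℕ → ℝ) (hg0 : ∀ n, 0 ≤ g n)
    (hgle : ∀ n : ℕ, 1 ≤ n →
      g n ≤ C * (((2 * (n:ℝ)) ^ e1 + (2 * (n:ℝ)) ^ e2) * p n ^ m)) :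
    Filter.Tendsto g Filter.atTop (nhds 0) := by
  have key : Filter.Tendsto (fun n : ℕ =>
      (C * 2 ^ e1) * ((2 * (n:ℝ) - 1) ^ e1 * p n ^ m)
        + (C * 2 ^ e2) * ((2 * (n:ℝ) - 1) ^ e2 * p n ^ m)) Filter.atTop (nhds 0) := by
    have := (hA.const_mul (C * 2 ^ e1)).add (hB.const_mul (C * 2 ^ e2))
    simpa using this
  refine squeeze_zero' ?_ ?_ key
  · filter_upwards with n using hg0 n
  · filter_upwards [Filter.eventually_ge_atTop 1] with n hn
    refine (hgle n hn).trans ?_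
    have h1 : (1:ℝ) ≤ (n:ℝ) := by exact_mod_cast hn
    have h2 : ∀ e : ℕ, (2 * (n:ℝ)) ^ e ≤ 2 ^ e * (2 * (n:ℝ) - 1) ^ e := by
      intro e
      calc (2 * (n:ℝ)) ^ e ≤ (2 * (2 * (n:ℝ) - 1)) ^ e :=
            pow_le_pow_left₀ (by positivity) (by linarith) e
        _ = 2 ^ e * (2 * (n:ℝ) - 1) ^ e := mul_pow _ _ _
    have hpm : (0:ℝ) ≤ p n ^ m := le_of_lt (pow_pos (hp n).1 m)
    calc C * (((2 * (n:ℝ)) ^ e1 + (2 * (n:ℝ)) ^ e2) * p n ^ m)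
        ≤ C * (((2 ^ e1 * (2 * (n:ℝ) - 1) ^ e1) + (2 ^ e2 * (2 * (n:ℝ) - 1) ^ e2)) * p n ^ m)
          := by
          refine mul_le_mul_of_nonneg_left ?_ hC
          refine mul_le_mul_of_nonneg_right ?_ hpm
          exact add_le_add (h2 e1) (h2 e2)
      _ = (C * 2 ^ e1) * ((2 * (n:ℝ) - 1) ^ e1 * p n ^ m)
            + (C * 2 ^ e2) * ((2 * (n:ℝ) - 1) ^ e2 * p n ^ m) := by ring

end Glue
/-- Fix `k ≥ 3`, and let `p = p(n)`. Suppose there exists `M ≥ 1` with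
`(2n-1)^{(M+1)l_k + L_k} p^M → 0`, `(2n-1)^{2l_k + M L_k} p^M → 0`,
`(2n-1)^{(2M+1)l_k + M L_k} p^{2M} → 0`, `(2n-1)^{3M l_k + L_k} p^{2M} → 0` and
`(2n-1)^{(M+1)l_k + 2M L_k} p^{2M} → 0` as `n → ∞`. Then a.a.s. (as `n → ∞`), in each of the
multigraphs `Σ₁, Σ₂, Σ₃` associated to the binomial random set of relators `R ⊆ C(n,k)`, no
two vertices are joined by `M` or more edges and no vertex is joined by double edges to more
than `M` distinct other vertices. -/
theorem bounded_multiplicities (k : ℕ) (hk : 3 ≤ k) (p : ℕ → ℝ)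
    (hp : ∀ n, 0 < p n ∧ p n < 1)
    (M : ℕ) (hM : 1 ≤ M)
    (h1 : Tendsto (fun n : ℕ =>
      (2 * (n : ℝ) - 1) ^ ((M + 1) * lk k + Lk k) * p n ^ M) atTop (nhds 0))
    (h2 : Tendsto (fun n : ℕ =>
      (2 * (n : ℝ) - 1) ^ (2 * lk k + M * Lk k) * p n ^ M) atTop (nhds 0))
    (h3 : Tendsto (fun n : ℕ =>
      (2 * (n : ℝ) - 1) ^ ((2 * M + 1) * lk k + M * Lk k) * p n ^ (2 * M)) atTop (nhds 0))
    (h4 : Tendsto (fun n : ℕ =>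
      (2 * (n : ℝ) - 1) ^ (3 * M * lk k + Lk k) * p n ^ (2 * M)) atTop (nhds 0))
    (h5 : Tendsto (fun n : ℕ =>
      (2 * (n : ℝ) - 1) ^ ((M + 1) * lk k + 2 * M * Lk k) * p n ^ (2 * M)) atTop (nhds 0)) :
    Tendsto (fun n : ℕ => cProb n k (p n)
      {ω | boundedMultiplicity M edge1 ω ∧ boundedMultiplicity M edge2 ω ∧
        boundedMultiplicity M edge3 ω})
      atTop (nhds 1) := by
  obtain ⟨M', rfl⟩ : ∃ M', M = M' + 1 := ⟨M - 1, by omega⟩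
  have hkl := two_lk_add_Lk k
  have hp0 : ∀ m : ℕ, (0:ℝ) ≤ p m := fun m => le_of_lt (hp m).1
  have hp1 : ∀ m : ℕ, p m ≤ 1 := fun m => le_of_lt (hp m).2
  have e1eq : (M' + 1 + 1) * lk k + Lk k = (2 * lk k + Lk k) + M' * lk k := by ring
  have e2eq : 2 * lk k + (M' + 1) * Lk k = (2 * lk k + Lk k) + M' * Lk k := by ring
  have e3eq : (2 * (M' + 1) + 1) * lk k + (M' + 1) * Lk k
      = (2 * lk k + Lk k) + lk k + M' * (Lk k + lk k) + M' * lk k := by ring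
  have e4eq : 3 * (M' + 1) * lk k + Lk k
      = (2 * lk k + Lk k) + lk k + M' * (lk k + lk k) + M' * lk k := by ring
  have e5eq : (M' + 1 + 1) * lk k + 2 * (M' + 1) * Lk k
      = (2 * lk k + Lk k) + Lk k + M' * (lk k + Lk k) + M' * Lk k := by ring
  rw [hkl] at e1eq e2eq e3eq e4eq e5eq
  rw [e1eq] at h1
  rw [e2eq] at h2
  rw [e3eq] at h3
  rw [e4eq] at h4
  rw [e5eq] at h5
  -- the six bounding functions
  set g1 : ℕ → ℝ := fun m =>
    ((Fintype.card (CWord m k) * (2 * (2 * m) ^ lk k) ^ (M' + 1 - 1) : ℕ) : ℝ)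
      * p m ^ (M' + 1) with hg1
  set g2 : ℕ → ℝ := fun m =>
    ((Fintype.card (CWord m k) * 2 * (2 * (2 * m) ^ lk k) *
      ((2 * m) ^ Lk k * (2 * m) ^ lk k + (2 * m) ^ lk k * (2 * m) ^ lk k) ^ (M' + 1 - 1) *
      (2 * (2 * m) ^ lk k) ^ (M' + 1 - 1) : ℕ) : ℝ) * p m ^ (2 * (M' + 1)) with hg2
  set g3 : ℕ → ℝ := fun m =>
    ((Fintype.card (CWord m k) * (2 * (2 * m) ^ Lk k) ^ (M' + 1 - 1) : ℕ) : ℝ)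
      * p m ^ (M' + 1) with hg3
  set g4 : ℕ → ℝ := fun m =>
    ((Fintype.card (CWord m k) * 2 * (2 * (2 * m) ^ Lk k) *
      ((2 * m) ^ lk k * (2 * m) ^ Lk k + (2 * m) ^ lk k * (2 * m) ^ Lk k) ^ (M' + 1 - 1) *
      (2 * (2 * m) ^ Lk k) ^ (M' + 1 - 1) : ℕ) : ℝ) * p m ^ (2 * (M' + 1)) with hg4
  set g6 : ℕ → ℝ := fun m =>
    ((Fintype.card (CWord m k) * 2 * (2 * (2 * m) ^ lk k) *
      ((2 * m) ^ lk k * (2 * m) ^ lk k + (2 * m) ^ Lk k * (2 * m) ^ lk k) ^ (M' + 1 - 1) *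
      (2 * (2 * m) ^ lk k) ^ (M' + 1 - 1) : ℕ) : ℝ) * p m ^ (2 * (M' + 1)) with hg6
  -- the bound on the complement probability
  have hbound : ∀ m : ℕ, cProb m k (p m)
      ({ω | boundedMultiplicity (M' + 1) edge1 ω ∧ boundedMultiplicity (M' + 1) edge2 ω ∧
        boundedMultiplicity (M' + 1) edge3 ω} : Set (CWord m k → Bool))ᶜ ≤
      g1 m + g2 m + (g3 m + g4 m) + (g1 m + g6 m) := by
    intro m
    have hb1 : cProb m k (p m)
        {ω | ¬ boundedMultiplicity (M' + 1) (G1 m k).ep ω} ≤ g1 m + g2 m := by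
      refine le_trans (cProb_mono (hp0 m) (hp1 m) (bad_subset (G1 m k) (M' + 1))) ?_
      refine le_trans (cProb_union_le (hp0 m) (hp1 m) _ _) ?_
      exact add_le_add (moment1 (G1 m k) (M' + 1) (by omega) (hp0 m) (hp1 m))
        (moment2 (G1 m k) (M' + 1) (by omega) (hp0 m) (hp1 m))
    have hb2 : cProb m k (p m)
        {ω | ¬ boundedMultiplicity (M' + 1) (G2 m k).ep ω} ≤ g3 m + g4 m := by
      refine le_trans (cProb_mono (hp0 m) (hp1 m) (bad_subset (G2 m k) (M' + 1))) ?_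
      refine le_trans (cProb_union_le (hp0 m) (hp1 m) _ _) ?_
      exact add_le_add (moment1 (G2 m k) (M' + 1) (by omega) (hp0 m) (hp1 m))
        (moment2 (G2 m k) (M' + 1) (by omega) (hp0 m) (hp1 m))
    have hb3 : cProb m k (p m)
        {ω | ¬ boundedMultiplicity (M' + 1) (G3 m k).ep ω} ≤ g1 m + g6 m := by
      refine le_trans (cProb_mono (hp0 m) (hp1 m) (bad_subset (G3 m k) (M' + 1))) ?_
      refine le_trans (cProb_union_le (hp0 m) (hp1 m) _ _) ?_
      exact add_le_add (moment1 (G3 m k) (M' + 1) (by omega) (hp0 m) (hp1 m))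
        (moment2 (G3 m k) (M' + 1) (by omega) (hp0 m) (hp1 m))
    have hsub : ({ω : CWord m k → Bool | boundedMultiplicity (M' + 1) edge1 ω ∧
        boundedMultiplicity (M' + 1) edge2 ω ∧ boundedMultiplicity (M' + 1) edge3 ω})ᶜ ⊆
        {ω | ¬ boundedMultiplicity (M' + 1) (G1 m k).ep ω} ∪
        ({ω | ¬ boundedMultiplicity (M' + 1) (G2 m k).ep ω} ∪
          {ω | ¬ boundedMultiplicity (M' + 1) (G3 m k).ep ω}) := by
      intro ω hω
      simp only [Set.mem_compl_iff, Set.mem_setOf_eq, Set.mem_union] at hω ⊢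
      tauto
    refine le_trans (cProb_mono (hp0 m) (hp1 m) hsub) ?_
    refine le_trans (cProb_union_le (hp0 m) (hp1 m) _ _) ?_
    have h23 := cProb_union_le (hp0 m) (hp1 m)
      {ω : CWord m k → Bool | ¬ boundedMultiplicity (M' + 1) (G2 m k).ep ω}
      {ω : CWord m k → Bool | ¬ boundedMultiplicity (M' + 1) (G3 m k).ep ω}
    linarith [hb1, hb2, hb3]
  -- tendsto of the bounding functions
  have t1 : Tendsto g1 atTop (nhds 0) := by
    refine tendsto_single p hp (k + M' * lk k) (M' + 1) (2 ^ M') (by positivity) h1 g1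
      (fun m => mul_nonneg (Nat.cast_nonneg _) (pow_nonneg (hp0 m) _)) ?_
    intro m hm
    rw [hg1, ← mul_assoc]
    exact mul_le_mul_of_nonneg_right (m1_bound m k (lk k) M') (pow_nonneg (hp0 m) _)
  have t2 : Tendsto g2 atTop (nhds 0) := by
    refine tendsto_double p hp (k + lk k + M' * (Lk k + lk k) + M' * lk k)
      (k + lk k + M' * (lk k + lk k) + M' * lk k) (2 * (M' + 1)) (2 ^ (2 * M' + 2))
      (by positivity) h3 h4 g2
      (fun m => mul_nonneg (Nat.cast_nonneg _) (pow_nonneg (hp0 m) _)) ?_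
    intro m hm
    rw [hg2, ← mul_assoc]
    exact mul_le_mul_of_nonneg_right (m2_bound m k (lk k) (Lk k) (lk k) M')
      (pow_nonneg (hp0 m) _)
  have t3 : Tendsto g3 atTop (nhds 0) := by
    refine tendsto_single p hp (k + M' * Lk k) (M' + 1) (2 ^ M') (by positivity) h2 g3
      (fun m => mul_nonneg (Nat.cast_nonneg _) (pow_nonneg (hp0 m) _)) ?_
    intro m hm
    rw [hg3, ← mul_assoc]
    exact mul_le_mul_of_nonneg_right (m1_bound m k (Lk k) M') (pow_nonneg (hp0 m) _)
  have t4 : Tendsto g4 atTop (nhds 0) := by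
    refine tendsto_double p hp (k + Lk k + M' * (lk k + Lk k) + M' * Lk k)
      (k + Lk k + M' * (lk k + Lk k) + M' * Lk k) (2 * (M' + 1)) (2 ^ (2 * M' + 2))
      (by positivity) h5 h5 g4
      (fun m => mul_nonneg (Nat.cast_nonneg _) (pow_nonneg (hp0 m) _)) ?_
    intro m hm
    rw [hg4, ← mul_assoc]
    exact mul_le_mul_of_nonneg_right (m2_bound m k (Lk k) (lk k) (lk k) M')
      (pow_nonneg (hp0 m) _)
  have t6 : Tendsto g6 atTop (nhds 0) := by
    refine tendsto_double p hp (k + lk k + M' * (lk k + lk k) + M' * lk k)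
      (k + lk k + M' * (Lk k + lk k) + M' * lk k) (2 * (M' + 1)) (2 ^ (2 * M' + 2))
      (by positivity) h4 h3 g6
      (fun m => mul_nonneg (Nat.cast_nonneg _) (pow_nonneg (hp0 m) _)) ?_
    intro m hm
    rw [hg6, ← mul_assoc]
    exact mul_le_mul_of_nonneg_right (m2_bound m k (lk k) (lk k) (Lk k) M')
      (pow_nonneg (hp0 m) _)
  have hfsum : Tendsto (fun m => g1 m + g2 m + (g3 m + g4 m) + (g1 m + g6 m))
      atTop (nhds 0) := by
    have := ((t1.add t2).add (t3.add t4)).add (t1.add t6)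
    simpa using this
  -- squeeze
  have hone : Tendsto (fun m => 1 - (g1 m + g2 m + (g3 m + g4 m) + (g1 m + g6 m)))
      atTop (nhds 1) := by
    have := (tendsto_const_nhds (x := (1:ℝ)) (f := atTop)).sub hfsum
    simpa using this
  refine tendsto_of_tendsto_of_tendsto_of_le_of_le hone tendsto_const_nhds ?_ ?_
  · intro m
    have hc := cProb_add_compl (n := m) (k := k) (p := p m)
      ({ω | boundedMultiplicity (M' + 1) edge1 ω ∧ boundedMultiplicity (M' + 1) edge2 ω ∧
        boundedMultiplicity (M' + 1) edge3 ω} : Set (CWord m k → Bool))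
    have hb := hbound m
    simp only []
    linarith
  · intro m
    exact cProb_le_one (hp0 m) (hp1 m) _
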